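/- arXiv:0710.2331 — 3 statements merged into one kernel-verified Lean document; each statement's English description precedes it below -/
import Mathlib

section
/- Let p₁, p₂ > 1 and δ₁, δ₂ ≥ 0, and suppose p and δ satisfy 1 < p ≤ min{p₁,p₂}, max{δ₁,δ₂} ≤ δ ≤ δ₁ + δ₂, and p + 2δ ≤ min{p₁ + 2δ₁, p₂ + 2δ₂}. Set δ₀ := min{δ₁,δ₂} and C(p,Δ) := 2^{p+2Δ+1}(1 + 2ζ(p)). If A and B are bounded operators with ‖A‖_{p₁,δ₁} < ∞ and ‖B‖_{p₂,δ₂} < ∞, then ‖AB‖_{p,δ} ≤ C(p, δ − δ₀)·‖A‖_{p₁,δ₁}·‖B‖_{p₂,δ₂}; in particular 𝒴(p₁,δ₁)·𝒴(p₂,δ₂) ⊆ 𝒴(p,δ). -/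
noncomputable section

open ContinuousLinearMap

variable {𝓗 : Type*} [NormedAddCommGroup 𝓗] [InnerProductSpace ℂ 𝓗] [CompleteSpace 𝓗]

/-- `⟨x⟩ := max {1, |x|}`. -/
def jap (x : ℝ) : ℝ := max 1 |x|

/-- `(Pₙ)_{n≥1}` is a family of mutually orthogonal nonzero orthogonal projections
with `Σₙ Pₙ = I` in the strong sense. -/
def ProjFamily (P : ℕ+ → 𝓗 →L[ℂ] 𝓗) : Prop :=
  (∀ n, IsSelfAdjoint (P n)) ∧ (∀ n, (P n).comp (P n) = P n) ∧
  (∀ m n, m ≠ n → (P m).comp (P n) = 0) ∧ (∀ n, P n ≠ 0) ∧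
  (∀ ψ : 𝓗, HasSum (fun n => P n ψ) ψ)

/-- The quantity `⟨m-n⟩^p · max{m,n}^(2δ) · ‖Pₘ A Pₙ‖`; the norm `‖A‖_{p,δ}` is its
supremum over `m, n ≥ 1`. -/
def wnorm (P : ℕ+ → 𝓗 →L[ℂ] 𝓗) (p δ : ℝ) (A : 𝓗 →L[ℂ] 𝓗) (m n : ℕ+) : ℝ :=
  jap (((m : ℕ) : ℝ) - ((n : ℕ) : ℝ)) ^ p * (((max m n : ℕ+) : ℕ) : ℝ) ^ (2 * δ) *
    ‖(P m).comp (A.comp (P n))‖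

/-- `A` is diagonal with respect to the family `P`. -/
def IsDiag (P : ℕ+ → 𝓗 →L[ℂ] 𝓗) (A : 𝓗 →L[ℂ] 𝓗) : Prop :=
  ∀ m n, m ≠ n → (P m).comp (A.comp (P n)) = 0

/-- `Dom(H) = {ψ : Σₙ Eₙ²‖Pₙψ‖² < ∞}`. -/
def HDom (P : ℕ+ → 𝓗 →L[ℂ] 𝓗) (E : ℕ+ → ℝ) : Set 𝓗 :=
  {ψ | Summable fun n => (E n) ^ 2 * ‖P n ψ‖ ^ 2}

/-- The form domain `Q_H = {ψ : Σₙ Eₙ‖Pₙψ‖² < ∞}`. -/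
def QDom (P : ℕ+ → 𝓗 →L[ℂ] 𝓗) (E : ℕ+ → ℝ) : Set 𝓗 :=
  {ψ | Summable fun n => E n * ‖P n ψ‖ ^ 2}

/-- `h = Hψ`, i.e. `h = Σₙ Eₙ Pₙ ψ`. -/
def IsHSum (P : ℕ+ → 𝓗 →L[ℂ] 𝓗) (E : ℕ+ → ℝ) (ψ h : 𝓗) : Prop :=
  HasSum (fun n => (E n : ℂ) • P n ψ) h

/-- `U` is unitary. -/
def IsUnitaryOp (U : 𝓗 →L[ℂ] 𝓗) : Prop := U * star U = 1 ∧ star U * U = 1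

/-- A family of bounded operators which is `C¹` in the strong sense. -/
def StrongC1 (V : ℝ → 𝓗 →L[ℂ] 𝓗) : Prop := ∀ ψ : 𝓗, ContDiff ℝ 1 fun t => V t ψ

/-- `U(t,s)` is a propagator for `H + V(t)`. -/
def IsPropagator (P : ℕ+ → 𝓗 →L[ℂ] 𝓗) (E : ℕ+ → ℝ) (V : ℝ → 𝓗 →L[ℂ] 𝓗)
    (U : ℝ → ℝ → 𝓗 →L[ℂ] 𝓗) : Prop :=
  (∀ t s, IsUnitaryOp (U t s)) ∧
  (∀ ψ : 𝓗, Continuous fun ts : ℝ × ℝ => U ts.1 ts.2 ψ) ∧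
  (∀ t, U t t = 1) ∧
  (∀ t s r, (U t s).comp (U s r) = U t r) ∧
  (∀ t s, ⇑(U t s) '' HDom P E = HDom P E) ∧
  (∀ s : ℝ, ∀ ψ ∈ HDom P E, ∀ t : ℝ, ∃ d : 𝓗,
    HasDerivAt (fun τ => U τ s ψ) d t ∧
    ∀ h : 𝓗, IsHSum P E (U t s ψ) h → Complex.I • d = h + V t (U t s ψ))

/-- The Riemann zeta function `ζ(s) = Σ_{n≥1} n^{-s}` (for real `s > 1`). -/
def rzeta (s : ℝ) : ℝ := ∑' n : ℕ+, (((n : ℕ) : ℝ) ^ s)⁻¹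

/-- The constant `C_p = 2^(p+1) (1 + 2 ζ(p-1))`. -/
def Cconst (p : ℝ) : ℝ := 2 ^ (p + 1) * (1 + 2 * rzeta (p - 1))


/-! ### Auxiliary lemmas -/

lemma one_le_jap (x : ℝ) : 1 ≤ jap x := le_max_left _ _

lemma jap_pos (x : ℝ) : 0 < jap x := lt_of_lt_of_le one_pos (one_le_jap x)

lemma abs_le_jap (x : ℝ) : |x| ≤ jap x := le_max_right _ _

lemma jap_sub_comm (x y : ℝ) : jap (x - y) = jap (y - x) := by
  rw [jap, jap, abs_sub_comm]

lemma jap_tri (a b c : ℝ) : jap (a - c) ≤ jap (a - b) + jap (b - c) := by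
  apply max_le
  · linarith [one_le_jap (a - b), (jap_pos (b - c)).le]
  · calc |a - c| ≤ |a - b| + |b - c| := abs_sub_le a b c
      _ ≤ _ := add_le_add (abs_le_jap _) (abs_le_jap _)

lemma jap_of_one_le {x : ℝ} (h : 1 ≤ x) : jap x = x := by
  rw [jap, abs_of_nonneg (by linarith)]
  exact max_eq_right h

lemma jap_neg (x : ℝ) : jap (-x) = jap x := by rw [jap, jap, abs_neg]

lemma jap_rpow_one_le {x e : ℝ} (he : 0 ≤ e) : 1 ≤ jap x ^ e :=
  Real.one_le_rpow (one_le_jap x) he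

lemma half_bound {M w γ Δ e : ℝ} (hM : 0 ≤ M) (hw : 1 ≤ w) (h : M ≤ 2 * w)
    (hγ0 : 0 ≤ γ) (hγΔ : γ ≤ Δ) (hγe : 2 * γ ≤ e) :
    M ^ (2 * γ) ≤ 2 ^ (2 * Δ) * w ^ e := by
  calc M ^ (2 * γ) ≤ (2 * w) ^ (2 * γ) := Real.rpow_le_rpow hM h (by linarith)
    _ = 2 ^ (2 * γ) * w ^ (2 * γ) := Real.mul_rpow (by norm_num) (by linarith)
    _ ≤ 2 ^ (2 * Δ) * w ^ e :=
      mul_le_mul (Real.rpow_le_rpow_of_exponent_le one_le_two (by linarith))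
        (Real.rpow_le_rpow_of_exponent_le hw hγe)
        (Real.rpow_nonneg (by linarith) _) (Real.rpow_nonneg (by norm_num) _)

lemma dagger {p p₁ δ₁ δ₂ δ : ℝ} (hp : 1 ≤ p) (hpp : p ≤ p₁)
    (hδ₁ : 0 ≤ δ₁) (hδ₂ : 0 ≤ δ₂) (hδa : δ₁ ≤ δ) (hδb : δ₂ ≤ δ) (hδhigh : δ ≤ δ₁ + δ₂)
    (hsum : p + 2 * δ ≤ p₁ + 2 * δ₁)
    {m n k : ℝ} (hm : 1 ≤ m) (hn : 1 ≤ n) (hk : 1 ≤ k)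
    (huv : jap (k - n) ≤ jap (m - k)) :
    (max m n) ^ (2 * δ) ≤
      2 ^ (2 * (δ - min δ₁ δ₂)) *
        (jap (m - k) ^ (p₁ - p) * ((max m k) ^ (2 * δ₁) * (max k n) ^ (2 * δ₂))) := by
  have hM1 : (1 : ℝ) ≤ max m n := le_trans hm (le_max_left _ _)
  have hX1 : (1 : ℝ) ≤ max m k := le_trans hm (le_max_left _ _)
  have hY1 : (1 : ℝ) ≤ max k n := le_trans hk (le_max_left _ _)
  have hu1 : (1 : ℝ) ≤ jap (m - k) := one_le_jap _
  have hΔ1 : δ - δ₁ ≤ δ - min δ₁ δ₂ := by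
    have := min_le_left δ₁ δ₂; linarith
  have hΔ2 : δ - δ₂ ≤ δ - min δ₁ δ₂ := by
    have := min_le_right δ₁ δ₂; linarith
  have hue : (1 : ℝ) ≤ jap (m - k) ^ (p₁ - p) :=
    jap_rpow_one_le (by linarith)
  have h2Δ : (1 : ℝ) ≤ (2 : ℝ) ^ (2 * (δ - min δ₁ δ₂)) := by
    apply Real.one_le_rpow one_le_two
    have := min_le_left δ₁ δ₂; nlinarith
  rcases le_total n m with hc | hc
  · -- M = m
    have hMX : max m n ≤ max m k := by
      rw [max_eq_left hc]; exact le_max_left _ _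
    have hsplit : (max m n) ^ (2 * δ) = (max m n) ^ (2 * δ₁) * (max m n) ^ (2 * (δ - δ₁)) := by
      rw [← Real.rpow_add (by linarith)]; ring_nf
    have h1 : (max m n) ^ (2 * δ₁) ≤ (max m k) ^ (2 * δ₁) :=
      Real.rpow_le_rpow (by linarith) hMX (by linarith)
    rcases le_or_gt (max m n) (2 * k) with hck | hck
    · -- far piece bounded by Y
      have h2 : (max m n) ^ (2 * (δ - δ₁)) ≤ 2 ^ (2 * (δ - min δ₁ δ₂)) * (max k n) ^ (2 * δ₂) :=
        half_bound (by linarith) hY1 (le_trans hck (by simp [le_max_left]))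
          (by linarith) hΔ1 (by linarith)
      calc (max m n) ^ (2 * δ)
          = (max m n) ^ (2 * δ₁) * (max m n) ^ (2 * (δ - δ₁)) := hsplit
        _ ≤ (max m k) ^ (2 * δ₁) * (2 ^ (2 * (δ - min δ₁ δ₂)) * (max k n) ^ (2 * δ₂)) := by
            apply mul_le_mul h1 h2 (Real.rpow_nonneg (by linarith) _)
              (Real.rpow_nonneg (by linarith) _)
        _ = 2 ^ (2 * (δ - min δ₁ δ₂)) * (1 * ((max m k) ^ (2 * δ₁) * (max k n) ^ (2 * δ₂))) := by
            ring
        _ ≤ _ := by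
            apply mul_le_mul_of_nonneg_left _ (by linarith)
            apply mul_le_mul_of_nonneg_right hue
            exact mul_nonneg (Real.rpow_nonneg (by linarith) _) (Real.rpow_nonneg (by linarith) _)
    · -- far piece bounded by u
      have hmax : max m n = m := max_eq_left hc
      have hmk : max m n ≤ 2 * jap (m - k) := by
        have h' : m - k ≥ 1 ∨ max m n ≤ 2 * (m - k) := by
          right; rw [hmax]; linarith [hck, hmax ▸ hck]
        have habs : m - k ≤ |m - k| := le_abs_self _
        have : max m n ≤ 2 * (m - k) := by rw [hmax]; rw [hmax] at hck; linarith
        calc max m n ≤ 2 * (m - k) := this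
          _ ≤ 2 * jap (m - k) := by
              have := le_trans habs (abs_le_jap (m - k)); linarith
      have h2 : (max m n) ^ (2 * (δ - δ₁)) ≤ 2 ^ (2 * (δ - min δ₁ δ₂)) * jap (m - k) ^ (p₁ - p) :=
        half_bound (by linarith) hu1 hmk (by linarith) hΔ1 (by linarith)
      have hYe : (1 : ℝ) ≤ (max k n) ^ (2 * δ₂) := Real.one_le_rpow hY1 (by linarith)
      calc (max m n) ^ (2 * δ)
          = (max m n) ^ (2 * δ₁) * (max m n) ^ (2 * (δ - δ₁)) := hsplit
        _ ≤ (max m k) ^ (2 * δ₁) * (2 ^ (2 * (δ - min δ₁ δ₂)) * jap (m - k) ^ (p₁ - p)) := by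
            apply mul_le_mul h1 h2 (Real.rpow_nonneg (by linarith) _)
              (Real.rpow_nonneg (by linarith) _)
        _ = 2 ^ (2 * (δ - min δ₁ δ₂)) * (jap (m - k) ^ (p₁ - p) * ((max m k) ^ (2 * δ₁) * 1)) := by
            ring
        _ ≤ _ := by
            apply mul_le_mul_of_nonneg_left _ (by linarith)
            apply mul_le_mul_of_nonneg_left _ (by linarith)
            apply mul_le_mul_of_nonneg_left hYe (Real.rpow_nonneg (by linarith) _)
  · -- M = n
    have hMY : max m n ≤ max k n := by
      rw [max_eq_right hc]; exact le_max_right _ _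
    have hsplit : (max m n) ^ (2 * δ) = (max m n) ^ (2 * δ₂) * (max m n) ^ (2 * (δ - δ₂)) := by
      rw [← Real.rpow_add (by linarith)]; ring_nf
    have h1 : (max m n) ^ (2 * δ₂) ≤ (max k n) ^ (2 * δ₂) :=
      Real.rpow_le_rpow (by linarith) hMY (by linarith)
    have huX : jap (m - k) ≤ max m k := by
      apply max_le (le_trans hm (le_max_left _ _))
      rw [abs_le]
      constructor
      · have := le_max_right m k; linarith
      · have := le_max_left m k; linarith
    have hMX2 : max m n ≤ 2 * max m k := by
      rcases le_or_gt (max m n) (2 * k) with hck | hck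
      · exact le_trans hck (by have := le_max_right m k; linarith)
      · have hmax : max m n = n := max_eq_right hc
        have hvn : max m n ≤ 2 * jap (k - n) := by
          rw [hmax]; rw [hmax] at hck
          have habs : n - k ≤ |k - n| := by
            rw [abs_sub_comm]; exact le_abs_self _
          have := le_trans habs (abs_le_jap (k - n))
          linarith
        calc max m n ≤ 2 * jap (k - n) := hvn
          _ ≤ 2 * jap (m - k) := by linarith
          _ ≤ 2 * max m k := by linarith
    have h2 : (max m n) ^ (2 * (δ - δ₂)) ≤ 2 ^ (2 * (δ - min δ₁ δ₂)) * (max m k) ^ (2 * δ₁) :=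
      half_bound (by linarith) hX1 hMX2 (by linarith) hΔ2 (by linarith)
    calc (max m n) ^ (2 * δ)
        = (max m n) ^ (2 * δ₂) * (max m n) ^ (2 * (δ - δ₂)) := hsplit
      _ ≤ (max k n) ^ (2 * δ₂) * (2 ^ (2 * (δ - min δ₁ δ₂)) * (max m k) ^ (2 * δ₁)) := by
          apply mul_le_mul h1 h2 (Real.rpow_nonneg (by linarith) _)
            (Real.rpow_nonneg (by linarith) _)
      _ = 2 ^ (2 * (δ - min δ₁ δ₂)) * (1 * ((max m k) ^ (2 * δ₁) * (max k n) ^ (2 * δ₂))) := by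
          ring
      _ ≤ _ := by
          apply mul_le_mul_of_nonneg_left _ (by linarith)
          apply mul_le_mul_of_nonneg_right hue
          exact mul_nonneg (Real.rpow_nonneg (by linarith) _) (Real.rpow_nonneg (by linarith) _)

lemma key {p p₁ δ₁ δ₂ δ : ℝ} (hp : 1 ≤ p) (hpp : p ≤ p₁)
    (hδ₁ : 0 ≤ δ₁) (hδ₂ : 0 ≤ δ₂) (hδa : δ₁ ≤ δ) (hδb : δ₂ ≤ δ) (hδhigh : δ ≤ δ₁ + δ₂)
    (hsum : p + 2 * δ ≤ p₁ + 2 * δ₁)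
    {m n k : ℝ} (hm : 1 ≤ m) (hn : 1 ≤ n) (hk : 1 ≤ k)
    (huv : jap (k - n) ≤ jap (m - k)) :
    jap (m - n) ^ p * (max m n) ^ (2 * δ) * jap (k - n) ^ p ≤
      2 ^ (p + 2 * (δ - min δ₁ δ₂)) * (jap (m - k) ^ p₁ * (max m k) ^ (2 * δ₁)) *
        (jap (k - n) ^ p * (max k n) ^ (2 * δ₂)) := by
  have hu0 : (0 : ℝ) < jap (m - k) := jap_pos _
  have h1 : jap (m - n) ≤ 2 * jap (m - k) := by
    have := jap_tri m k n; linarith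
  have hd := dagger hp hpp hδ₁ hδ₂ hδa hδb hδhigh hsum hm hn hk huv
  have e1 : jap (m - n) ^ p ≤ 2 ^ p * jap (m - k) ^ p := by
    calc jap (m - n) ^ p ≤ (2 * jap (m - k)) ^ p :=
          Real.rpow_le_rpow (jap_pos _).le h1 (by linarith)
      _ = 2 ^ p * jap (m - k) ^ p := Real.mul_rpow (by norm_num) hu0.le
  have e2 : jap (m - k) ^ p * jap (m - k) ^ (p₁ - p) = jap (m - k) ^ p₁ := by
    rw [← Real.rpow_add hu0]; ring_nf
  have e3 : (2 : ℝ) ^ (p + 2 * (δ - min δ₁ δ₂)) = 2 ^ p * 2 ^ (2 * (δ - min δ₁ δ₂)) :=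
    Real.rpow_add two_pos _ _
  calc jap (m - n) ^ p * (max m n) ^ (2 * δ) * jap (k - n) ^ p
      ≤ (2 ^ p * jap (m - k) ^ p) *
          (2 ^ (2 * (δ - min δ₁ δ₂)) *
            (jap (m - k) ^ (p₁ - p) * ((max m k) ^ (2 * δ₁) * (max k n) ^ (2 * δ₂)))) *
          jap (k - n) ^ p := by
        apply mul_le_mul_of_nonneg_right _ (Real.rpow_nonneg (jap_pos _).le _)
        apply mul_le_mul e1 hd (Real.rpow_nonneg (by positivity) _)
        positivity
    _ = 2 ^ p * 2 ^ (2 * (δ - min δ₁ δ₂)) *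
          ((jap (m - k) ^ p * jap (m - k) ^ (p₁ - p)) * (max m k) ^ (2 * δ₁)) *
          (jap (k - n) ^ p * (max k n) ^ (2 * δ₂)) := by ring
    _ = _ := by rw [e2, ← e3]


lemma rzeta_eq (p : ℝ) : rzeta p = ∑' n : ℕ, ((((n : ℝ) + 1)) ^ p)⁻¹ := by
  rw [rzeta, ← Equiv.tsum_eq Equiv.pnatEquivNat.symm (fun k : ℕ+ => (((k : ℕ) : ℝ) ^ p)⁻¹)]
  congr 1
  funext n
  have : ((Equiv.pnatEquivNat.symm n : ℕ+) : ℕ) = n + 1 := by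
    simp [Equiv.pnatEquivNat, Nat.succPNat]
  rw [this]
  push_cast
  ring_nf

lemma summable_succ_rpow_inv {p : ℝ} (hp : 1 < p) :
    Summable (fun n : ℕ => (((n : ℝ) + 1) ^ p)⁻¹) := by
  have h0 : Summable (fun n : ℕ => ((n : ℝ) ^ p)⁻¹) := Real.summable_nat_rpow_inv.mpr hp
  have h1 := h0.comp_injective (add_right_injective 1)
  refine h1.congr fun n => ?_
  simp only [Function.comp]
  push_cast
  ring_nf

lemma japsum {p : ℝ} (hp : 1 < p) (j : ℕ+) :
    Summable (fun k : ℕ+ => (jap (((k : ℕ) : ℝ) - ((j : ℕ) : ℝ)) ^ p)⁻¹) ∧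
      ∑' k : ℕ+, (jap (((k : ℕ) : ℝ) - ((j : ℕ) : ℝ)) ^ p)⁻¹ ≤ 1 + 2 * rzeta p := by
  set g : ℤ → ℝ := fun i => (jap ((i : ℤ) : ℝ) ^ p)⁻¹ with hg
  have hg0 : ∀ i, 0 ≤ g i := fun i => inv_nonneg.2 (Real.rpow_nonneg (jap_pos _).le _)
  have hsucc := summable_succ_rpow_inv hp
  have hgnat_eq : ∀ n : ℕ, g ((n : ℤ) + 1) = (((n : ℝ) + 1) ^ p)⁻¹ := by
    intro n
    have : jap ((((n : ℤ) + 1) : ℤ) : ℝ) = (n : ℝ) + 1 := by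
      push_cast
      exact jap_of_one_le (by have := Nat.cast_nonneg (α := ℝ) n; linarith)
    simp only [hg, this]
  have hgneg_eq : ∀ n : ℕ, g (-((n : ℤ) + 1)) = (((n : ℝ) + 1) ^ p)⁻¹ := by
    intro n
    have : jap (((-((n : ℤ) + 1)) : ℤ) : ℝ) = (n : ℝ) + 1 := by
      push_cast
      rw [show -((n : ℝ) + 1) = -(((n : ℝ) + 1)) by ring, jap_neg]
      exact jap_of_one_le (by have := Nat.cast_nonneg (α := ℝ) n; linarith)
    simp only [hg, this]
  have hgnat : Summable (fun n : ℕ => g n) := by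
    rw [← summable_nat_add_iff 1]
    refine hsucc.congr fun n => ?_
    rw [show ((n + 1 : ℕ) : ℤ) = (n : ℤ) + 1 by push_cast; ring, hgnat_eq]
  have hgneg : Summable (fun n : ℕ => g (-((n : ℤ) + 1))) := by
    refine hsucc.congr fun n => (hgneg_eq n).symm
  have hgs : Summable g := Summable.of_nat_of_neg_add_one hgnat hgneg
  have htg : ∑' i : ℤ, g i ≤ 1 + 2 * rzeta p := by
    rw [tsum_of_nat_of_neg_add_one hgnat hgneg]
    have e1 : ∑' n : ℕ, g n = 1 + rzeta p := by
      rw [Summable.tsum_eq_zero_add hgnat]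
      have hz : g ((0 : ℕ) : ℤ) = 1 := by
        simp [hg, jap, Real.one_rpow]
      rw [hz, rzeta_eq]
      congr 1
      refine tsum_congr fun n => ?_
      rw [show ((n + 1 : ℕ) : ℤ) = (n : ℤ) + 1 by push_cast; ring, hgnat_eq]
    have e2 : ∑' n : ℕ, g (-((n : ℤ) + 1)) = rzeta p := by
      rw [rzeta_eq]
      exact tsum_congr fun n => hgneg_eq n
    rw [e1, e2]; ring_nf; rfl
  set e : ℕ+ → ℤ := fun k => ((k : ℕ) : ℤ) - ((j : ℕ) : ℤ) with he
  have hei : Function.Injective e := by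
    intro x y hxy
    simp only [he, sub_left_inj, Int.natCast_inj] at hxy
    exact PNat.coe_injective hxy
  have hfeq : ∀ k : ℕ+, (jap (((k : ℕ) : ℝ) - ((j : ℕ) : ℝ)) ^ p)⁻¹ = g (e k) := by
    intro k
    simp only [hg, he]
    congr 2
    push_cast
    ring
  have hf : Summable (fun k : ℕ+ => (jap (((k : ℕ) : ℝ) - ((j : ℕ) : ℝ)) ^ p)⁻¹) := by
    refine (hgs.comp_injective hei).congr fun k => (hfeq k).symm
  refine ⟨hf, le_trans ?_ htg⟩
  exact Summable.tsum_le_tsum_of_inj e hei (fun c _ => hg0 c) (fun k => le_of_eq (hfeq k)) hf hgs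


lemma pnat_one_le_cast (m : ℕ+) : (1 : ℝ) ≤ ((m : ℕ) : ℝ) := by
  exact_mod_cast m.property

lemma pnat_cast_max (m n : ℕ+) :
    (((max m n : ℕ+) : ℕ) : ℝ) = max ((m : ℕ) : ℝ) ((n : ℕ) : ℝ) := by
  rcases le_total m n with h | h
  · rw [max_eq_right h, max_eq_right]; exact_mod_cast h
  · rw [max_eq_left h, max_eq_left]; exact_mod_cast h

lemma wnorm_nonneg {𝓗 : Type*} [NormedAddCommGroup 𝓗] [InnerProductSpace ℂ 𝓗]
    (P : ℕ+ → 𝓗 →L[ℂ] 𝓗) (p δ : ℝ) (A : 𝓗 →L[ℂ] 𝓗) (m n : ℕ+) :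
    0 ≤ wnorm P p δ A m n := by
  unfold wnorm
  apply mul_nonneg
  apply mul_nonneg (Real.rpow_nonneg (jap_pos _).le _) (Real.rpow_nonneg (by positivity) _)
  exact norm_nonneg _

/-- Lemma 2.2: product formula for the classes `𝒴(p,δ)`,
`‖AB‖_{p,δ} ≤ C(p, δ-δ₀) ‖A‖_{p₁,δ₁} ‖B‖_{p₂,δ₂}` with `C(p,Δ) = 2^{p+2Δ+1}(1+2ζ(p))`. -/
theorem statement7
    (P : ℕ+ → 𝓗 →L[ℂ] 𝓗) (hP : ProjFamily P)
    (p₁ p₂ δ₁ δ₂ p δ : ℝ)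
    (hp₁ : 1 < p₁) (hp₂ : 1 < p₂) (hδ₁ : 0 ≤ δ₁) (hδ₂ : 0 ≤ δ₂)
    (hp : 1 < p) (hpmin : p ≤ min p₁ p₂)
    (hδlow : max δ₁ δ₂ ≤ δ) (hδhigh : δ ≤ δ₁ + δ₂)
    (hsum : p + 2 * δ ≤ min (p₁ + 2 * δ₁) (p₂ + 2 * δ₂))
    (A B : 𝓗 →L[ℂ] 𝓗) (a b : ℝ)
    (hA : ∀ m n : ℕ+, wnorm P p₁ δ₁ A m n ≤ a)
    (hB : ∀ m n : ℕ+, wnorm P p₂ δ₂ B m n ≤ b) :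
    ∀ m n : ℕ+, wnorm P p δ (A.comp B) m n ≤
      2 ^ (p + 2 * (δ - min δ₁ δ₂) + 1) * (1 + 2 * rzeta p) * a * b := by
  obtain ⟨-, hPid, -, -, hPsum⟩ := hP
  have hpp₁ : p ≤ p₁ := le_trans hpmin (min_le_left _ _)
  have hpp₂ : p ≤ p₂ := le_trans hpmin (min_le_right _ _)
  have hδa : δ₁ ≤ δ := le_trans (le_max_left _ _) hδlow
  have hδb : δ₂ ≤ δ := le_trans (le_max_right _ _) hδlow
  have hs₁ : p + 2 * δ ≤ p₁ + 2 * δ₁ := le_trans hsum (min_le_left _ _)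
  have hs₂ : p + 2 * δ ≤ p₂ + 2 * δ₂ := le_trans hsum (min_le_right _ _)
  have ha0 : 0 ≤ a := le_trans (wnorm_nonneg P p₁ δ₁ A 1 1) (hA 1 1)
  have hb0 : 0 ≤ b := le_trans (wnorm_nonneg P p₂ δ₂ B 1 1) (hB 1 1)
  intro m n
  set κ : ℝ := 2 ^ (p + 2 * (δ - min δ₁ δ₂)) with hκ
  have hκ0 : 0 ≤ κ := Real.rpow_nonneg (by norm_num) _
  have h1m : (1 : ℝ) ≤ ((m : ℕ) : ℝ) := pnat_one_le_cast m
  have h1n : (1 : ℝ) ≤ ((n : ℕ) : ℝ) := pnat_one_le_cast n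
  set W : ℝ := jap (((m : ℕ) : ℝ) - ((n : ℕ) : ℝ)) ^ p *
      (max ((m : ℕ) : ℝ) ((n : ℕ) : ℝ)) ^ (2 * δ) with hW
  have hW1 : 1 ≤ W := by
    have f1 : 1 ≤ jap (((m : ℕ) : ℝ) - ((n : ℕ) : ℝ)) ^ p := jap_rpow_one_le (by linarith)
    have f2 : (1 : ℝ) ≤ (max ((m : ℕ) : ℝ) ((n : ℕ) : ℝ)) ^ (2 * δ) :=
      Real.one_le_rpow (le_trans h1m (le_max_left _ _)) (by linarith)
    rw [hW]; nlinarith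
  set c : ℕ+ → ℝ := fun k =>
    ‖(P m).comp (A.comp (P k))‖ * ‖(P k).comp (B.comp (P n))‖ with hc
  have hc0 : ∀ k, 0 ≤ c k := fun k => mul_nonneg (norm_nonneg _) (norm_nonneg _)
  set f₁ : ℕ+ → ℝ := fun k => (jap (((k : ℕ) : ℝ) - ((m : ℕ) : ℝ)) ^ p)⁻¹ with hf₁
  set f₂ : ℕ+ → ℝ := fun k => (jap (((k : ℕ) : ℝ) - ((n : ℕ) : ℝ)) ^ p)⁻¹ with hf₂
  obtain ⟨hsm1, htm1⟩ := japsum hp m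
  obtain ⟨hsm2, htm2⟩ := japsum hp n
  set d : ℕ+ → ℝ := fun k => κ * a * b * (f₁ k + f₂ k) with hd
  have hds : Summable d := (hsm1.add hsm2).mul_left _
  -- pointwise bound
  have hWb : ∀ k, W * c k ≤ d k := by
    intro k
    have h1k : (1 : ℝ) ≤ ((k : ℕ) : ℝ) := pnat_one_le_cast k
    set u : ℝ := jap (((m : ℕ) : ℝ) - ((k : ℕ) : ℝ)) with hu
    set v : ℝ := jap (((k : ℕ) : ℝ) - ((n : ℕ) : ℝ)) with hv
    set X : ℝ := max ((m : ℕ) : ℝ) ((k : ℕ) : ℝ) with hX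
    set Y : ℝ := max ((k : ℕ) : ℝ) ((n : ℕ) : ℝ) with hY
    have hu0 : (0 : ℝ) < u := jap_pos _
    have hv0 : (0 : ℝ) < v := jap_pos _
    have hX0 : (0 : ℝ) < X := lt_of_lt_of_le one_pos (le_trans h1m (le_max_left _ _))
    have hY0 : (0 : ℝ) < Y := lt_of_lt_of_le one_pos (le_trans h1k (le_max_left _ _))
    set w₁ : ℝ := u ^ p₁ * X ^ (2 * δ₁) with hw₁
    set w₂ : ℝ := v ^ p₂ * Y ^ (2 * δ₂) with hw₂
    have hw₁0 : 0 < w₁ := mul_pos (Real.rpow_pos_of_pos hu0 _) (Real.rpow_pos_of_pos hX0 _)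
    have hw₂0 : 0 < w₂ := mul_pos (Real.rpow_pos_of_pos hv0 _) (Real.rpow_pos_of_pos hY0 _)
    have hA' : w₁ * ‖(P m).comp (A.comp (P k))‖ ≤ a := by
      have h := hA m k
      rw [wnorm, pnat_cast_max] at h
      exact h
    have hB' : w₂ * ‖(P k).comp (B.comp (P n))‖ ≤ b := by
      have h := hB k n
      rw [wnorm, pnat_cast_max] at h
      exact h
    have habstract : ∀ t : ℝ, 0 < t → W * t ≤ κ * (w₁ * w₂) → (t⁻¹ ≤ f₁ k + f₂ k) → W * c k ≤ d k := by
      intro t ht hWt hinv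
      have step : W * c k * t * (w₁ * w₂) ≤ κ * a * b * (w₁ * w₂) := by
        calc W * c k * t * (w₁ * w₂)
            = (W * t) * ((w₁ * ‖(P m).comp (A.comp (P k))‖) * (w₂ * ‖(P k).comp (B.comp (P n))‖)) := by
              rw [hc]; ring
          _ ≤ (κ * (w₁ * w₂)) * (a * b) := by
              apply mul_le_mul hWt _ _ (mul_nonneg hκ0 (mul_nonneg hw₁0.le hw₂0.le))
              · apply mul_le_mul hA' hB' (mul_nonneg hw₂0.le (norm_nonneg _)) ha0
              · apply mul_nonneg (mul_nonneg hw₁0.le (norm_nonneg _))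
                  (mul_nonneg hw₂0.le (norm_nonneg _))
          _ = κ * a * b * (w₁ * w₂) := by ring
      have step2 : W * c k * t ≤ κ * a * b :=
        le_of_mul_le_mul_right step (mul_pos hw₁0 hw₂0)
      have step3 : W * c k ≤ κ * a * b * t⁻¹ := by
        rw [← div_eq_mul_inv, le_div_iff₀ ht]
        exact step2
      calc W * c k ≤ κ * a * b * t⁻¹ := step3
        _ ≤ κ * a * b * (f₁ k + f₂ k) := by
            apply mul_le_mul_of_nonneg_left hinv
            exact mul_nonneg (mul_nonneg hκ0 ha0) hb0
        _ = d k := by rw [hd]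
    rcases le_total v u with hvu | huv
    · -- v ≤ u : use key directly
      have hkey := key hp.le hpp₁ hδ₁ hδ₂ hδa hδb hδhigh hs₁ h1m h1n h1k hvu
      apply habstract (v ^ p) (Real.rpow_pos_of_pos hv0 _)
      · -- W * v^p ≤ κ * (w₁ * w₂)
        calc W * v ^ p ≤ κ * (u ^ p₁ * X ^ (2 * δ₁)) * (v ^ p * Y ^ (2 * δ₂)) := hkey
          _ ≤ κ * (u ^ p₁ * X ^ (2 * δ₁)) * (v ^ p₂ * Y ^ (2 * δ₂)) := by
              apply mul_le_mul_of_nonneg_left _ (mul_nonneg hκ0 hw₁0.le)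
              apply mul_le_mul_of_nonneg_right _ (Real.rpow_nonneg hY0.le _)
              exact Real.rpow_le_rpow_of_exponent_le (one_le_jap _) hpp₂
          _ = κ * (w₁ * w₂) := by rw [hw₁, hw₂]; ring
      · -- (v^p)⁻¹ ≤ f₁ k + f₂ k
        have he : f₂ k = (v ^ p)⁻¹ := by rw [hf₂, hv]
        have h0 : 0 ≤ f₁ k := inv_nonneg.2 (Real.rpow_nonneg (jap_pos _).le _)
        linarith [he.ge]
    · -- u ≤ v : symmetric case
      have huv' : jap (((k : ℕ) : ℝ) - ((m : ℕ) : ℝ)) ≤ jap (((n : ℕ) : ℝ) - ((k : ℕ) : ℝ)) := by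
        rw [jap_sub_comm ((k : ℕ) : ℝ) ((m : ℕ) : ℝ), jap_sub_comm ((n : ℕ) : ℝ) ((k : ℕ) : ℝ)]
        exact huv
      have hkey := key hp.le hpp₂ hδ₂ hδ₁ hδb hδa (by linarith) hs₂ h1n h1m h1k huv'
      rw [jap_sub_comm ((n : ℕ) : ℝ) ((m : ℕ) : ℝ), max_comm ((n : ℕ) : ℝ) ((m : ℕ) : ℝ),
        jap_sub_comm ((k : ℕ) : ℝ) ((m : ℕ) : ℝ), jap_sub_comm ((n : ℕ) : ℝ) ((k : ℕ) : ℝ),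
        max_comm ((n : ℕ) : ℝ) ((k : ℕ) : ℝ), max_comm ((k : ℕ) : ℝ) ((m : ℕ) : ℝ),
        min_comm δ₂ δ₁] at hkey
      apply habstract (u ^ p) (Real.rpow_pos_of_pos hu0 _)
      · calc W * u ^ p ≤ κ * (v ^ p₂ * Y ^ (2 * δ₂)) * (u ^ p * X ^ (2 * δ₁)) := hkey
          _ ≤ κ * (v ^ p₂ * Y ^ (2 * δ₂)) * (u ^ p₁ * X ^ (2 * δ₁)) := by
              apply mul_le_mul_of_nonneg_left _ (mul_nonneg hκ0 hw₂0.le)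
              apply mul_le_mul_of_nonneg_right _ (Real.rpow_nonneg hX0.le _)
              exact Real.rpow_le_rpow_of_exponent_le (one_le_jap _) hpp₁
          _ = κ * (w₁ * w₂) := by rw [hw₁, hw₂]; ring
      · have he : f₁ k = (u ^ p)⁻¹ := by
          simp only [hf₁]
          rw [jap_sub_comm ((k : ℕ) : ℝ) ((m : ℕ) : ℝ), hu]
        have h0 : 0 ≤ f₂ k := inv_nonneg.2 (Real.rpow_nonneg (jap_pos _).le _)
        linarith [he.ge]
  -- summability of c
  have hW0 : (0 : ℝ) < W := lt_of_lt_of_le one_pos hW1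
  have hcs : Summable c := by
    refine Summable.of_nonneg_of_le hc0 (fun k => ?_) (hds.mul_left W⁻¹)
    rw [← inv_mul_cancel_left₀ hW0.ne' (c k)]
    exact mul_le_mul_of_nonneg_left (hWb k) (inv_nonneg.2 hW0.le)
  -- operator norm bound
  have hop : ‖(P m).comp ((A.comp B).comp (P n))‖ ≤ ∑' k, c k := by
    apply ContinuousLinearMap.opNorm_le_bound _ (tsum_nonneg hc0)
    intro ψ
    have hsum2 : HasSum (fun k => ((P m).comp A) (P k (B (P n ψ))))
        (((P m).comp A) (B (P n ψ))) := (hPsum (B (P n ψ))).mapL _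
    have hterm : ∀ k, ‖((P m).comp A) (P k (B (P n ψ)))‖ ≤ c k * ‖ψ‖ := by
      intro k
      have hid : P k (P k (B (P n ψ))) = P k (B (P n ψ)) := by
        have h := DFunLike.congr_fun (hPid k) (B (P n ψ))
        simpa using h
      calc ‖((P m).comp A) (P k (B (P n ψ)))‖
          = ‖((P m).comp (A.comp (P k))) (((P k).comp (B.comp (P n))) ψ)‖ := by
            simp only [ContinuousLinearMap.comp_apply]
            rw [hid]
        _ ≤ ‖(P m).comp (A.comp (P k))‖ * ‖((P k).comp (B.comp (P n))) ψ‖ :=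
            ContinuousLinearMap.le_opNorm _ _
        _ ≤ ‖(P m).comp (A.comp (P k))‖ * (‖(P k).comp (B.comp (P n))‖ * ‖ψ‖) := by
            apply mul_le_mul_of_nonneg_left (ContinuousLinearMap.le_opNorm _ _) (norm_nonneg _)
        _ = c k * ‖ψ‖ := by rw [hc]; ring
    have hns : Summable (fun k => ‖((P m).comp A) (P k (B (P n ψ)))‖) :=
      Summable.of_nonneg_of_le (fun k => norm_nonneg _) hterm (hcs.mul_right _)
    calc ‖((P m).comp ((A.comp B).comp (P n))) ψ‖
        = ‖∑' k, ((P m).comp A) (P k (B (P n ψ)))‖ := by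
          rw [hsum2.tsum_eq]; rfl
      _ ≤ ∑' k, ‖((P m).comp A) (P k (B (P n ψ)))‖ := norm_tsum_le_tsum_norm hns
      _ ≤ ∑' k, c k * ‖ψ‖ := Summable.tsum_le_tsum hterm hns (hcs.mul_right _)
      _ = (∑' k, c k) * ‖ψ‖ := tsum_mul_right
  -- assemble
  have hfinal : W * ‖(P m).comp ((A.comp B).comp (P n))‖ ≤
      2 ^ (p + 2 * (δ - min δ₁ δ₂) + 1) * (1 + 2 * rzeta p) * a * b := by
    calc W * ‖(P m).comp ((A.comp B).comp (P n))‖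
        ≤ W * ∑' k, c k := mul_le_mul_of_nonneg_left hop hW0.le
      _ = ∑' k, W * c k := tsum_mul_left.symm
      _ ≤ ∑' k, d k := Summable.tsum_le_tsum hWb (hcs.mul_left W) hds
      _ = κ * a * b * ((∑' k, f₁ k) + ∑' k, f₂ k) := by
          rw [hd, tsum_mul_left, Summable.tsum_add hsm1 hsm2]
      _ ≤ κ * a * b * ((1 + 2 * rzeta p) + (1 + 2 * rzeta p)) := by
          apply mul_le_mul_of_nonneg_left (add_le_add htm1 htm2)
          exact mul_nonneg (mul_nonneg hκ0 ha0) hb0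
      _ = 2 ^ (p + 2 * (δ - min δ₁ δ₂) + 1) * (1 + 2 * rzeta p) * a * b := by
          rw [show (2 : ℝ) ^ (p + 2 * (δ - min δ₁ δ₂) + 1) = κ * 2 by
            rw [hκ, Real.rpow_add two_pos, Real.rpow_one]]
          ring
  rw [wnorm, pnat_cast_max, ← hW]
  exact hfinal


end
end

section
/- Suppose the real sequence (E_n)_{n≥1} satisfies E_n ≥ c·n^α for all n, with c > 0 and 0 < α < 1 (so all E_n > 0 and H^{−1/2} := Σ_m E_m^{−1/2}P_m is a bounded operator). Then for every p ≥ 1 there exists a constant K > 0, depending only on p, α and c, such that for every δ > 0, every bounded operator B with ‖B‖_{p,δ} < ∞, and every n ≥ 1: ‖P_n B Q_n H^{−1/2}‖ ≤ K·‖B‖_{p,δ}·n^{−2δ−α/2}, where Q_n := I − P_n. -/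
noncomputable section

open ContinuousLinearMap

variable {𝓗 : Type*} [NormedAddCommGroup 𝓗] [InnerProductSpace ℂ 𝓗] [CompleteSpace 𝓗]

lemma aux_sum_inv_sq_Icc (N : ℕ) (hN : 1 ≤ N) :
    ∑ k ∈ Finset.Icc 1 N, (((k : ℝ)) ^ 2)⁻¹ ≤ 2 - (N : ℝ)⁻¹ := by
  induction N, hN using Nat.le_induction with
  | base => norm_num
  | succ N hN ih =>
    rw [Finset.sum_Icc_succ_top (by omega)]
    have hN0 : (0:ℝ) < N := by exact_mod_cast hN
    have key : (((N + 1 : ℕ) : ℝ) ^ 2)⁻¹ ≤ (N : ℝ)⁻¹ - ((N + 1 : ℕ) : ℝ)⁻¹ := by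
      push_cast
      rw [← sub_nonneg]
      have h2 : (0:ℝ) < (N:ℝ) + 1 := by linarith
      have heq : (N : ℝ)⁻¹ - ((N:ℝ) + 1)⁻¹ - (((N:ℝ) + 1) ^ 2)⁻¹ =
          ((N:ℝ) * ((N:ℝ) + 1) ^ 2)⁻¹ := by
        field_simp
        ring
      rw [heq]
      positivity
    push_cast at *
    linarith

lemma aux_sum_inv_sq (t : Finset ℕ) (ht : 0 ∉ t) :
    ∑ k ∈ t, (((k : ℝ)) ^ 2)⁻¹ ≤ 2 := by
  rcases t.eq_empty_or_nonempty with rfl | hne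
  · simp
  have hmax : 1 ≤ t.max' hne := by
    have h := t.max'_mem hne
    rcases Nat.eq_zero_or_pos (t.max' hne) with h0 | h0
    · exact absurd (h0 ▸ h) ht
    · exact h0
  have hsub : t ⊆ Finset.Icc 1 (t.max' hne) := by
    intro k hk
    refine Finset.mem_Icc.2 ⟨?_, Finset.le_max' t k hk⟩
    rcases Nat.eq_zero_or_pos k with h0 | h0
    · exact absurd (h0 ▸ hk) ht
    · exact h0
  calc ∑ k ∈ t, (((k : ℝ)) ^ 2)⁻¹
      ≤ ∑ k ∈ Finset.Icc 1 (t.max' hne), (((k : ℝ)) ^ 2)⁻¹ :=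
        Finset.sum_le_sum_of_subset_of_nonneg hsub (fun i _ _ => by positivity)
    _ ≤ 2 - ((t.max' hne : ℕ) : ℝ)⁻¹ := aux_sum_inv_sq_Icc _ hmax
    _ ≤ 2 := by
        have : (0:ℝ) ≤ ((t.max' hne : ℕ) : ℝ)⁻¹ := by positivity
        linarith

lemma aux_sum_jap (n : ℕ+) (s : Finset ℕ+) (hn : n ∉ s) :
    ∑ m ∈ s, (jap (((n : ℕ) : ℝ) - ((m : ℕ) : ℝ))) ^ (-(2:ℝ)) ≤ 4 := by
  classical
  set d : ℕ+ → ℕ := fun m => (((m : ℕ) : ℤ) - ((n : ℕ) : ℤ)).natAbs with hd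
  have hterm : ∀ m ∈ s, (jap (((n : ℕ) : ℝ) - ((m : ℕ) : ℝ))) ^ (-(2:ℝ))
      = (((d m : ℕ) : ℝ) ^ 2)⁻¹ := by
    intro m hm
    have hmn : m ≠ n := fun h => hn (h ▸ hm)
    have hd1 : 1 ≤ d m := by
      have : (m : ℕ) ≠ (n : ℕ) := fun h => hmn (PNat.coe_injective h)
      simp only [hd]
      omega
    have habs : |((n : ℕ) : ℝ) - ((m : ℕ) : ℝ)| = ((d m : ℕ) : ℝ) := by
      simp only [hd]
      rw [Nat.cast_natAbs, abs_sub_comm]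
      push_cast
      ring_nf
    have hjap : jap (((n : ℕ) : ℝ) - ((m : ℕ) : ℝ)) = ((d m : ℕ) : ℝ) := by
      unfold jap
      rw [habs]
      exact max_eq_right (by exact_mod_cast hd1)
    rw [hjap, Real.rpow_neg (by positivity), ← Real.rpow_natCast ((d m : ℕ) : ℝ) 2]
    norm_num
  rw [Finset.sum_congr rfl hterm]
  set t1 := s.filter (fun m : ℕ+ => (m : ℕ) < (n : ℕ)) with ht1
  set t2 := s.filter (fun m : ℕ+ => ¬ (m : ℕ) < (n : ℕ)) with ht2
  have hsplit : ∑ m ∈ s, (((d m : ℕ) : ℝ) ^ 2)⁻¹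
      = ∑ m ∈ t1, (((d m : ℕ) : ℝ) ^ 2)⁻¹ + ∑ m ∈ t2, (((d m : ℕ) : ℝ) ^ 2)⁻¹ :=
    (Finset.sum_filter_add_sum_filter_not s _ _).symm
  have hinj1 : Set.InjOn d t1 := by
    intro a ha b hb hab
    have ha' : (a : ℕ) < (n : ℕ) := (Finset.mem_filter.1 ha).2
    have hb' : (b : ℕ) < (n : ℕ) := (Finset.mem_filter.1 hb).2
    apply PNat.coe_injective
    simp only [hd] at hab
    omega
  have hinj2 : Set.InjOn d t2 := by
    intro a ha b hb hab
    have ha' : ¬ (a : ℕ) < (n : ℕ) := (Finset.mem_filter.1 ha).2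
    have hb' : ¬ (b : ℕ) < (n : ℕ) := (Finset.mem_filter.1 hb).2
    apply PNat.coe_injective
    simp only [hd] at hab
    omega
  have hb1 : ∑ m ∈ t1, (((d m : ℕ) : ℝ) ^ 2)⁻¹ ≤ 2 := by
    have himg := Finset.sum_image (s := t1) (f := fun k : ℕ => ((k : ℝ) ^ 2)⁻¹)
      (g := d) (fun a ha b hb hab => hinj1 ha hb hab)
    rw [← himg]
    apply aux_sum_inv_sq
    intro h0
    obtain ⟨m, hm, hdm⟩ := Finset.mem_image.1 h0
    have hm' : (m : ℕ) < (n : ℕ) := (Finset.mem_filter.1 hm).2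
    simp only [hd] at hdm
    omega
  have hb2 : ∑ m ∈ t2, (((d m : ℕ) : ℝ) ^ 2)⁻¹ ≤ 2 := by
    have himg := Finset.sum_image (s := t2) (f := fun k : ℕ => ((k : ℝ) ^ 2)⁻¹)
      (g := d) (fun a ha b hb hab => hinj2 ha hb hab)
    rw [← himg]
    apply aux_sum_inv_sq
    intro h0
    obtain ⟨m, hm, hdm⟩ := Finset.mem_image.1 h0
    have hmn : m ≠ n := fun h => hn (h ▸ (Finset.mem_filter.1 hm).1)
    have : (m : ℕ) ≠ (n : ℕ) := fun h => hmn (PNat.coe_injective h)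
    simp only [hd] at hdm
    omega
  linarith

lemma aux_sum_alpha (α : ℝ) (hα0 : 0 < α) (hα1 : α ≤ 1) (n : ℕ+) (s : Finset ℕ+)
    (hn : n ∉ s) :
    ∑ m ∈ s, ((m : ℕ) : ℝ) ^ (-α) * (jap (((n : ℕ) : ℝ) - ((m : ℕ) : ℝ))) ^ (-(2:ℝ))
      ≤ 12 * ((n : ℕ) : ℝ) ^ (-α) := by
  classical
  have hnpos : (0:ℝ) < ((n : ℕ) : ℝ) := by exact_mod_cast n.pos
  have hn1 : (1:ℝ) ≤ ((n : ℕ) : ℝ) := by exact_mod_cast n.one_le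
  set F : ℕ+ → ℝ :=
    fun m => ((m : ℕ) : ℝ) ^ (-α) * (jap (((n : ℕ) : ℝ) - ((m : ℕ) : ℝ))) ^ (-(2:ℝ)) with hF
  set s1 := s.filter (fun m : ℕ+ => (n : ℕ) ≤ 2 * (m : ℕ)) with hs1
  set s2 := s.filter (fun m : ℕ+ => ¬ (n : ℕ) ≤ 2 * (m : ℕ)) with hs2
  have hsplit : ∑ m ∈ s, F m = ∑ m ∈ s1, F m + ∑ m ∈ s2, F m :=
    (Finset.sum_filter_add_sum_filter_not s _ _).symm
  -- s1 part
  have hb1 : ∑ m ∈ s1, F m ≤ 8 * ((n : ℕ) : ℝ) ^ (-α) := by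
    have hterm : ∀ m ∈ s1, F m ≤
        (2 * ((n : ℕ) : ℝ) ^ (-α)) * (jap (((n : ℕ) : ℝ) - ((m : ℕ) : ℝ))) ^ (-(2:ℝ)) := by
      intro m hm
      have h2m : ((n : ℕ) : ℝ) / 2 ≤ ((m : ℕ) : ℝ) := by
        have := (Finset.mem_filter.1 hm).2
        have : ((n:ℕ):ℝ) ≤ 2 * ((m:ℕ):ℝ) := by exact_mod_cast this
        linarith
      have hma : ((m : ℕ) : ℝ) ^ (-α) ≤ (((n : ℕ) : ℝ) / 2) ^ (-α) :=
        Real.rpow_le_rpow_of_nonpos (by linarith) h2m (by linarith)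
      have heq : (((n : ℕ) : ℝ) / 2) ^ (-α) = ((n : ℕ) : ℝ) ^ (-α) * 2 ^ α := by
        rw [Real.div_rpow (by linarith) (by norm_num), Real.rpow_neg (by norm_num : (0:ℝ) ≤ 2)]
        field_simp
      have h2a : (2:ℝ) ^ α ≤ 2 := by
        calc (2:ℝ) ^ α ≤ (2:ℝ) ^ (1:ℝ) := Real.rpow_le_rpow_of_exponent_le one_le_two hα1
          _ = 2 := Real.rpow_one 2
      have hmb : ((m : ℕ) : ℝ) ^ (-α) ≤ 2 * ((n : ℕ) : ℝ) ^ (-α) := by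
        rw [heq] at hma
        have hna : (0:ℝ) ≤ ((n : ℕ) : ℝ) ^ (-α) := Real.rpow_nonneg (by linarith) _
        calc ((m : ℕ) : ℝ) ^ (-α) ≤ ((n : ℕ) : ℝ) ^ (-α) * 2 ^ α := hma
          _ ≤ ((n : ℕ) : ℝ) ^ (-α) * 2 := by nlinarith
          _ = 2 * ((n : ℕ) : ℝ) ^ (-α) := by ring
      exact mul_le_mul_of_nonneg_right hmb (Real.rpow_nonneg (le_of_lt (jap_pos _)) _)
    calc ∑ m ∈ s1, F m
        ≤ ∑ m ∈ s1, (2 * ((n : ℕ) : ℝ) ^ (-α)) *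
            (jap (((n : ℕ) : ℝ) - ((m : ℕ) : ℝ))) ^ (-(2:ℝ)) := Finset.sum_le_sum hterm
      _ = (2 * ((n : ℕ) : ℝ) ^ (-α)) *
            ∑ m ∈ s1, (jap (((n : ℕ) : ℝ) - ((m : ℕ) : ℝ))) ^ (-(2:ℝ)) := by
          rw [Finset.mul_sum]
      _ ≤ (2 * ((n : ℕ) : ℝ) ^ (-α)) * 4 := by
          apply mul_le_mul_of_nonneg_left
          · exact aux_sum_jap n s1 (fun h => hn (Finset.mem_filter.1 h).1)
          · positivity
      _ = 8 * ((n : ℕ) : ℝ) ^ (-α) := by ring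
  -- s2 part
  have hb2 : ∑ m ∈ s2, F m ≤ 4 * ((n : ℕ) : ℝ) ^ (-α) := by
    have hterm : ∀ m ∈ s2, F m ≤ 4 / ((n : ℕ) : ℝ) ^ 2 := by
      intro m hm
      have hmlt : 2 * (m : ℕ) < (n : ℕ) := by
        have := (Finset.mem_filter.1 hm).2
        omega
      have hm1 : (1:ℝ) ≤ ((m : ℕ) : ℝ) := by exact_mod_cast m.one_le
      have hgap : ((n : ℕ) : ℝ) / 2 ≤ ((n : ℕ) : ℝ) - ((m : ℕ) : ℝ) := by
        have : 2 * ((m:ℕ):ℝ) < ((n:ℕ):ℝ) := by exact_mod_cast hmlt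
        linarith
      have hja : jap (((n : ℕ) : ℝ) - ((m : ℕ) : ℝ)) = ((n : ℕ) : ℝ) - ((m : ℕ) : ℝ) := by
        unfold jap
        rw [abs_of_nonneg (by linarith)]
        exact max_eq_right (by linarith)
      have hj1 : (jap (((n : ℕ) : ℝ) - ((m : ℕ) : ℝ))) ^ (-(2:ℝ)) ≤
          (((n : ℕ) : ℝ) / 2) ^ (-(2:ℝ)) := by
        rw [hja]
        exact Real.rpow_le_rpow_of_nonpos (by linarith) hgap (by norm_num)
      have hj2 : (((n : ℕ) : ℝ) / 2) ^ (-(2:ℝ)) = 4 / ((n : ℕ) : ℝ) ^ 2 := by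
        have e1 : (((n : ℕ) : ℝ) / 2) ^ (-(2:ℝ)) = ((((n : ℕ) : ℝ) / 2) ^ (2:ℕ))⁻¹ := by
          rw [Real.rpow_neg (by positivity), ← Real.rpow_natCast (((n:ℕ):ℝ)/2) 2]
          norm_num
        rw [e1, div_pow, inv_div]
        norm_num
      have hm2 : ((m : ℕ) : ℝ) ^ (-α) ≤ 1 :=
        Real.rpow_le_one_of_one_le_of_nonpos hm1 (by linarith)
      calc F m ≤ 1 * (jap (((n : ℕ) : ℝ) - ((m : ℕ) : ℝ))) ^ (-(2:ℝ)) := by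
            apply mul_le_mul_of_nonneg_right hm2 (Real.rpow_nonneg (le_of_lt (jap_pos _)) _)
        _ = (jap (((n : ℕ) : ℝ) - ((m : ℕ) : ℝ))) ^ (-(2:ℝ)) := one_mul _
        _ ≤ (((n : ℕ) : ℝ) / 2) ^ (-(2:ℝ)) := hj1
        _ = 4 / ((n : ℕ) : ℝ) ^ 2 := hj2
    have hcard : (s2.card : ℝ) ≤ ((n : ℕ) : ℝ) := by
      have : s2.card ≤ (Finset.range (n : ℕ)).card := by
        refine Finset.card_le_card_of_injOn (fun m => (m : ℕ)) ?_ ?_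
        · intro m hm
          have h2 := (Finset.mem_filter.1 hm).2
          have h1 := m.one_le
          simp only [Finset.mem_coe, Finset.mem_range]
          omega
        · intro a _ b _ hab
          exact PNat.coe_injective hab
      rw [Finset.card_range] at this
      exact_mod_cast this
    calc ∑ m ∈ s2, F m ≤ ∑ _m ∈ s2, 4 / ((n : ℕ) : ℝ) ^ 2 := Finset.sum_le_sum hterm
      _ = (s2.card : ℝ) * (4 / ((n : ℕ) : ℝ) ^ 2) := by
          rw [Finset.sum_const, nsmul_eq_mul]
      _ ≤ ((n : ℕ) : ℝ) * (4 / ((n : ℕ) : ℝ) ^ 2) := by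
          apply mul_le_mul_of_nonneg_right hcard (by positivity)
      _ = 4 * (((n : ℕ) : ℝ))⁻¹ := by field_simp
      _ = 4 * ((n : ℕ) : ℝ) ^ (-(1:ℝ)) := by rw [Real.rpow_neg_one]
      _ ≤ 4 * ((n : ℕ) : ℝ) ^ (-α) := by
          apply mul_le_mul_of_nonneg_left _ (by norm_num)
          exact Real.rpow_le_rpow_of_exponent_le hn1 (by linarith)
    
  linarith

open scoped ComplexInnerProductSpace in
lemma aux_sum_sq_proj {𝓗 : Type*} [NormedAddCommGroup 𝓗] [InnerProductSpace ℂ 𝓗]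
    [CompleteSpace 𝓗] (P : ℕ+ → 𝓗 →L[ℂ] 𝓗)
    (hsa : ∀ n, IsSelfAdjoint (P n)) (hid : ∀ n, (P n).comp (P n) = P n)
    (horth : ∀ m n, m ≠ n → (P m).comp (P n) = 0)
    (s : Finset ℕ+) (ψ : 𝓗) : ∑ m ∈ s, ‖P m ψ‖ ^ 2 ≤ ‖ψ‖ ^ 2 := by
  classical
  have hadj : ∀ m (x y : 𝓗), ⟪P m x, y⟫ = ⟪x, P m y⟫ := by
    intro m x y
    conv_lhs => rw [← (ContinuousLinearMap.isSelfAdjoint_iff'.mp (hsa m))]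
    exact ContinuousLinearMap.adjoint_inner_left _ _ _
  have hPP : ∀ m (x : 𝓗), P m (P m x) = P m x := fun m x => by
    rw [← ContinuousLinearMap.comp_apply, hid m]
  have hPO : ∀ m k, m ≠ k → ∀ x : 𝓗, P m (P k x) = 0 := fun m k h x => by
    rw [← ContinuousLinearMap.comp_apply, horth m k h]
    rfl
  set Qψ : 𝓗 := ∑ m ∈ s, P m ψ with hQψ
  set X : ℝ := ∑ m ∈ s, ‖P m ψ‖ ^ 2 with hX
  have hX0 : 0 ≤ X := Finset.sum_nonneg fun m _ => sq_nonneg _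
  have hcross : ∀ m k : ℕ+, m ≠ k → ⟪P m ψ, P k ψ⟫ = 0 := by
    intro m k hmk
    rw [hadj m ψ (P k ψ), hPO m k hmk, inner_zero_right]
  have h1 : ⟪Qψ, Qψ⟫ = ∑ m ∈ s, ⟪P m ψ, P m ψ⟫ := by
    rw [hQψ, sum_inner]
    refine Finset.sum_congr rfl fun m hm => ?_
    rw [inner_sum]
    exact Finset.sum_eq_single_of_mem m hm (fun k _ hkm => hcross m k hkm.symm)
  have hterm' : ∀ x : 𝓗, ⟪x, x⟫ = ((‖x‖ ^ 2 : ℝ) : ℂ) := by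
    intro x
    rw [inner_self_eq_norm_sq_to_K]
    norm_cast
  have hterm : ∀ m : ℕ+, ⟪P m ψ, P m ψ⟫ = ((‖P m ψ‖ ^ 2 : ℝ) : ℂ) := by
    intro m
    rw [inner_self_eq_norm_sq_to_K]
    norm_cast
  have h2 : ⟪Qψ, Qψ⟫ = ((X : ℝ) : ℂ) := by
    rw [h1, hX]
    push_cast
    exact Finset.sum_congr rfl fun m _ => by rw [hterm m]; push_cast; ring
  have hXQ : X = ‖Qψ‖ ^ 2 := by
    have h := h2.symm.trans (hterm' Qψ)
    exact_mod_cast h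
  have h3 : X ≤ ‖ψ‖ * ‖Qψ‖ := by
    have he : ∀ m : ℕ+, ⟪ψ, P m ψ⟫ = ⟪P m ψ, P m ψ⟫ := by
      intro m
      have e := hadj m ψ (P m ψ)
      rw [hPP m ψ] at e
      exact e.symm
    have hiq : ⟪ψ, Qψ⟫ = ((X : ℝ) : ℂ) :=
      calc ⟪ψ, Qψ⟫ = ∑ m ∈ s, ⟪ψ, P m ψ⟫ := by rw [hQψ, inner_sum]
        _ = ∑ m ∈ s, ⟪P m ψ, P m ψ⟫ := Finset.sum_congr rfl fun m _ => he m
        _ = ⟪Qψ, Qψ⟫ := h1.symm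
        _ = ((X : ℝ) : ℂ) := h2
    calc X = (⟪ψ, Qψ⟫).re := by rw [hiq]; norm_num
      _ ≤ ‖⟪ψ, Qψ⟫‖ := Complex.re_le_norm _
      _ ≤ ‖ψ‖ * ‖Qψ‖ := norm_inner_le_norm _ _
  by_cases hq : ‖Qψ‖ = 0
  · rw [hq, mul_zero] at h3
    calc X ≤ 0 := h3
      _ ≤ ‖ψ‖ ^ 2 := sq_nonneg _
  · have hqpos : 0 < ‖Qψ‖ := lt_of_le_of_ne (norm_nonneg _) (Ne.symm hq)
    have hQle : ‖Qψ‖ ≤ ‖ψ‖ := by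
      rw [hXQ] at h3
      have := le_of_mul_le_mul_right (by nlinarith : ‖Qψ‖ * ‖Qψ‖ ≤ ‖ψ‖ * ‖Qψ‖) hqpos
      exact this
    rw [hXQ]
    exact pow_le_pow_left₀ (norm_nonneg _) hQle 2


set_option maxHeartbeats 1000000

/-- Lemma 3.3: for `B ∈ 𝒴(p,δ)`,
`‖Pₙ B Qₙ H^{-1/2}‖ ≤ K ‖B‖_{p,δ} n^{-2δ-α/2}`. -/
theorem statement9
    (P : ℕ+ → 𝓗 →L[ℂ] 𝓗) (hP : ProjFamily P)
    (E : ℕ+ → ℝ) (c α : ℝ) (hc : 0 < c) (hα0 : 0 < α) (hα1 : α < 1)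
    (hE : ∀ n : ℕ+, c * ((n : ℕ) : ℝ) ^ α ≤ E n)
    (p : ℝ) (hp : 1 ≤ p) :
    ∃ K > 0, ∀ δ : ℝ, 0 < δ → ∀ (B : 𝓗 →L[ℂ] 𝓗) (b : ℝ),
      (∀ m n : ℕ+, wnorm P p δ B m n ≤ b) →
      ∀ Hih : 𝓗 →L[ℂ] 𝓗,
        (∀ ψ : 𝓗, HasSum (fun m => ((E m ^ (-(1 : ℝ) / 2) : ℝ) : ℂ) • P m ψ) (Hih ψ)) →
        ∀ n : ℕ+,
          ‖(P n).comp (B.comp ((1 - P n).comp Hih))‖ ≤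
            K * b * ((n : ℕ) : ℝ) ^ (-(2 * δ) - α / 2) := by
  classical
  obtain ⟨hsa, hid, horth, -, -⟩ := hP
  have h12c : (0:ℝ) < 12 / c := by positivity
  refine ⟨Real.sqrt (12 / c), Real.sqrt_pos.mpr h12c, ?_⟩
  intro δ hδ B b hb Hih hHih n
  set K := Real.sqrt (12 / c) with hK
  have hK2 : K ^ 2 = 12 / c := Real.sq_sqrt h12c.le
  have hEpos : ∀ m : ℕ+, 0 < E m := fun m => by
    have h1 : (0:ℝ) < c * ((m : ℕ) : ℝ) ^ α := by
      have : (0:ℝ) < ((m : ℕ) : ℝ) := by exact_mod_cast m.pos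
      positivity
    exact lt_of_lt_of_le h1 (hE m)
  have hb0 : 0 ≤ b := by
    refine le_trans ?_ (hb 1 1)
    unfold wnorm
    have h1 : (0:ℝ) ≤ jap (((1:ℕ+) : ℕ) - (((1:ℕ+) : ℕ) : ℝ)) := le_of_lt (jap_pos _)
    positivity
  set nr : ℝ := ((n : ℕ) : ℝ) ^ (-(2 * δ) - α / 2) with hnr
  have hnpos : (0:ℝ) < ((n:ℕ):ℝ) := by exact_mod_cast n.pos
  have hn1 : (1:ℝ) ≤ ((n:ℕ):ℝ) := by exact_mod_cast n.one_le
  have hnr0 : 0 ≤ nr := Real.rpow_nonneg hnpos.le _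
  have hK0 : 0 ≤ K := Real.sqrt_nonneg _
  have hnr2 : nr ^ 2 = ((n:ℕ):ℝ) ^ (-(4*δ)) * ((n:ℕ):ℝ) ^ (-α) := by
    have he : ((-(2 * δ) - α / 2) * (((2:ℕ)):ℝ)) = (-(4*δ) + -α) := by push_cast; ring
    rw [hnr, ← Real.rpow_natCast (((n:ℕ):ℝ) ^ (-(2 * δ) - α / 2)) 2,
      ← Real.rpow_mul hnpos.le, he, Real.rpow_add hnpos]
  have hM0 : 0 ≤ K * b * nr := by positivity
  refine ContinuousLinearMap.opNorm_le_bound _ hM0 ?_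
  intro ψ
  set L := (P n).comp (B.comp (1 - P n)) with hL
  set u : ℕ+ → ℝ := fun m => if m = n then 0 else
    E m ^ (-(1:ℝ)/2) * ‖(P n).comp (B.comp (P m))‖ with hu
  set v : ℕ+ → ℝ := fun m => ‖P m ψ‖ with hv
  have hu0 : ∀ m, 0 ≤ u m := fun m => by
    rw [hu]
    dsimp only
    split
    · exact le_refl 0
    · have := (hEpos m).le
      positivity
  have hv0 : ∀ m, 0 ≤ v m := fun m => norm_nonneg _
  have hPP : ∀ m (x : 𝓗), P m (P m x) = P m x := fun m x => by
    rw [← ContinuousLinearMap.comp_apply, hid m]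
  have hPO : ∀ m k, m ≠ k → ∀ x : 𝓗, P m (P k x) = 0 := fun m k h x => by
    rw [← ContinuousLinearMap.comp_apply, horth m k h]
    rfl
  -- term bound
  have htb : ∀ m : ℕ+, ‖((E m ^ (-(1:ℝ)/2) : ℝ) : ℂ) • L (P m ψ)‖ ≤ u m * v m := by
    intro m
    rw [norm_smul, Complex.norm_real, Real.norm_of_nonneg (Real.rpow_nonneg (hEpos m).le _)]
    by_cases hmn : m = n
    · subst hmn
      have : L (P m ψ) = 0 := by
        rw [hL]
        simp [ContinuousLinearMap.comp_apply, ContinuousLinearMap.sub_apply, hPP m ψ]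
      rw [this]
      simp [hu]
    · have h0 : (1 - P n) (P m ψ) = P m ψ := by
        simp [ContinuousLinearMap.sub_apply, hPO n m (Ne.symm hmn)]
      have h1 : L (P m ψ) = ((P n).comp (B.comp (P m))) (P m ψ) := by
        rw [hL]
        simp only [ContinuousLinearMap.comp_apply]
        rw [h0, hPP m ψ]
      rw [h1, hu, hv]
      dsimp only
      rw [if_neg hmn, mul_assoc]
      exact mul_le_mul_of_nonneg_left
        (((P n).comp (B.comp (P m))).le_opNorm (P m ψ))
        (Real.rpow_nonneg (hEpos m).le _)
  -- sum of u^2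
  have hsu : ∀ s : Finset ℕ+, ∑ m ∈ s, u m ^ 2 ≤ (K * b * nr) ^ 2 := by
    intro s
    have hzero : u n ^ 2 = 0 := by simp [hu]
    rw [← Finset.sum_erase s hzero]
    set C0 : ℝ := c⁻¹ * b ^ 2 * ((n:ℕ):ℝ) ^ (-(4*δ)) with hC0
    have hC00 : 0 ≤ C0 := by positivity
    have hterm2 : ∀ m ∈ s.erase n, u m ^ 2 ≤
        C0 * (((m:ℕ):ℝ) ^ (-α) * (jap (((n:ℕ):ℝ) - ((m:ℕ):ℝ))) ^ (-(2:ℝ))) := by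
      intro m hm
      have hmn : m ≠ n := Finset.ne_of_mem_erase hm
      have hmpos : (0:ℝ) < ((m:ℕ):ℝ) := by exact_mod_cast m.pos
      set J : ℝ := jap (((n:ℕ):ℝ) - ((m:ℕ):ℝ)) with hJ
      have hJ1 : 1 ≤ J := one_le_jap _
      have hJ0 : 0 < J := jap_pos _
      set Mx : ℝ := (((max n m : ℕ+) : ℕ) : ℝ) with hMx
      have hMxn : ((n:ℕ):ℝ) ≤ Mx := by
        rw [hMx]
        have : (n : ℕ) ≤ ((max n m : ℕ+) : ℕ) :=
          (PNat.coe_le_coe n (max n m)).mpr (le_max_left n m)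
        exact_mod_cast this
      have hMx0 : (0:ℝ) < Mx := lt_of_lt_of_le hnpos hMxn
      set Bnm : ℝ := ‖(P n).comp (B.comp (P m))‖ with hBnm
      have hX : (0:ℝ) < J ^ p * Mx ^ (2*δ) := by positivity
      have h4a : Bnm ≤ b / (J ^ p * Mx ^ (2*δ)) := by
        rw [le_div_iff₀ hX]
        calc Bnm * (J ^ p * Mx ^ (2*δ)) = J ^ p * Mx ^ (2*δ) * Bnm := by ring
          _ ≤ b := hb n m
      have h4b : Bnm ^ 2 ≤ (b / (J ^ p * Mx ^ (2*δ))) ^ 2 :=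
        pow_le_pow_left₀ (norm_nonneg _) h4a 2
      have h4c : (b / (J ^ p * Mx ^ (2*δ))) ^ 2
          = b ^ 2 * (J ^ (p*2))⁻¹ * (Mx ^ (2*δ*2))⁻¹ := by
        rw [div_pow, mul_pow, ← Real.rpow_natCast (J ^ p) 2, ← Real.rpow_mul hJ0.le,
          ← Real.rpow_natCast (Mx ^ (2*δ)) 2, ← Real.rpow_mul hMx0.le]
        push_cast
        rw [div_eq_mul_inv, mul_inv]
        ring
      have h4d : (J ^ (p*2))⁻¹ ≤ J ^ (-(2:ℝ)) := by
        rw [← Real.rpow_neg hJ0.le]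
        exact Real.rpow_le_rpow_of_exponent_le hJ1 (by nlinarith)
      have h4e : (Mx ^ (2*δ*2))⁻¹ ≤ ((n:ℕ):ℝ) ^ (-(4*δ)) := by
        rw [← Real.rpow_neg hMx0.le]
        calc Mx ^ (-(2*δ*2)) ≤ ((n:ℕ):ℝ) ^ (-(2*δ*2)) :=
              Real.rpow_le_rpow_of_nonpos hnpos hMxn (by nlinarith)
          _ = ((n:ℕ):ℝ) ^ (-(4*δ)) := by congr 1; ring
      have h4 : Bnm ^ 2 ≤ b ^ 2 * J ^ (-(2:ℝ)) * ((n:ℕ):ℝ) ^ (-(4*δ)) := by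
        calc Bnm ^ 2 ≤ b ^ 2 * (J ^ (p*2))⁻¹ * (Mx ^ (2*δ*2))⁻¹ := by
              rw [← h4c]; exact h4b
          _ ≤ b ^ 2 * J ^ (-(2:ℝ)) * ((n:ℕ):ℝ) ^ (-(4*δ)) := by
              apply mul_le_mul (mul_le_mul_of_nonneg_left h4d (by positivity)) h4e
                (by positivity) (by positivity)
      have h2 : (E m ^ (-(1:ℝ)/2)) ^ 2 = E m ^ (-(1:ℝ)) := by
        rw [← Real.rpow_natCast (E m ^ (-(1:ℝ)/2)) 2, ← Real.rpow_mul (hEpos m).le]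
        norm_num
      have h3 : E m ^ (-(1:ℝ)) ≤ c⁻¹ * ((m:ℕ):ℝ) ^ (-α) := by
        rw [Real.rpow_neg_one]
        have heq : c⁻¹ * ((m:ℕ):ℝ) ^ (-α) = (c * ((m:ℕ):ℝ) ^ α)⁻¹ := by
          rw [mul_inv, Real.rpow_neg hmpos.le]
        rw [heq]
        exact inv_anti₀ (by positivity) (hE m)
      calc u m ^ 2 = E m ^ (-(1:ℝ)) * Bnm ^ 2 := by
            rw [hu]
            dsimp only
            rw [if_neg hmn, mul_pow, h2]
        _ ≤ (c⁻¹ * ((m:ℕ):ℝ) ^ (-α)) * (b ^ 2 * J ^ (-(2:ℝ)) * ((n:ℕ):ℝ) ^ (-(4*δ))) := by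
            apply mul_le_mul h3 h4 (sq_nonneg _) (by positivity)
        _ = C0 * (((m:ℕ):ℝ) ^ (-α) * J ^ (-(2:ℝ))) := by rw [hC0]; ring
    calc ∑ m ∈ s.erase n, u m ^ 2
        ≤ ∑ m ∈ s.erase n,
            C0 * (((m:ℕ):ℝ) ^ (-α) * (jap (((n:ℕ):ℝ) - ((m:ℕ):ℝ))) ^ (-(2:ℝ))) :=
          Finset.sum_le_sum hterm2
      _ = C0 * ∑ m ∈ s.erase n,
            ((m:ℕ):ℝ) ^ (-α) * (jap (((n:ℕ):ℝ) - ((m:ℕ):ℝ))) ^ (-(2:ℝ)) := by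
          rw [Finset.mul_sum]
      _ ≤ C0 * (12 * ((n:ℕ):ℝ) ^ (-α)) :=
          mul_le_mul_of_nonneg_left
            (aux_sum_alpha α hα0 hα1.le n (s.erase n) (Finset.notMem_erase n s)) hC00
      _ = (K * b * nr) ^ 2 := by
          rw [mul_pow, mul_pow, hK2, hnr2, hC0]
          ring
  -- partial-sum bound
  have hps : ∀ s : Finset ℕ+, ∑ m ∈ s, u m * v m ≤ (K * b * nr) * ‖ψ‖ := by
    intro s
    have hsv : ∑ m ∈ s, v m ^ 2 ≤ ‖ψ‖ ^ 2 := aux_sum_sq_proj P hsa hid horth s ψ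
    have hCS := Finset.sum_mul_sq_le_sq_mul_sq s u v
    have huv0 : 0 ≤ ∑ m ∈ s, u m * v m :=
      Finset.sum_nonneg fun m _ => mul_nonneg (hu0 m) (hv0 m)
    have hsq : (∑ m ∈ s, u m * v m) ^ 2 ≤ ((K * b * nr) * ‖ψ‖) ^ 2 := by
      calc (∑ m ∈ s, u m * v m) ^ 2 ≤ (∑ m ∈ s, u m ^ 2) * ∑ m ∈ s, v m ^ 2 := hCS
        _ ≤ (K * b * nr) ^ 2 * ‖ψ‖ ^ 2 := by
            apply mul_le_mul (hsu s) hsv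
              (Finset.sum_nonneg fun m _ => sq_nonneg _) (sq_nonneg _)
        _ = ((K * b * nr) * ‖ψ‖) ^ 2 := by ring
    calc ∑ m ∈ s, u m * v m = Real.sqrt ((∑ m ∈ s, u m * v m) ^ 2) :=
          (Real.sqrt_sq huv0).symm
      _ ≤ Real.sqrt (((K * b * nr) * ‖ψ‖) ^ 2) := Real.sqrt_le_sqrt hsq
      _ = (K * b * nr) * ‖ψ‖ := Real.sqrt_sq (by positivity)
  -- HasSum
  have hsum : HasSum (fun m => ((E m ^ (-(1:ℝ)/2) : ℝ) : ℂ) • L (P m ψ)) (L (Hih ψ)) := by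
    have h := (hHih ψ).mapL L
    simp only [map_smul] at h
    exact h
  have ht : Filter.Tendsto
      (fun s : Finset ℕ+ => ∑ m ∈ s, ((E m ^ (-(1:ℝ)/2) : ℝ) : ℂ) • L (P m ψ))
      Filter.atTop (nhds (L (Hih ψ))) := hsum
  show ‖L (Hih ψ)‖ ≤ (K * b * nr) * ‖ψ‖
  refine le_of_tendsto ht.norm (Filter.Eventually.of_forall fun s => ?_)
  calc ‖∑ m ∈ s, ((E m ^ (-(1:ℝ)/2) : ℝ) : ℂ) • L (P m ψ)‖
      ≤ ∑ m ∈ s, ‖((E m ^ (-(1:ℝ)/2) : ℝ) : ℂ) • L (P m ψ)‖ := norm_sum_le _ _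
    _ ≤ ∑ m ∈ s, u m * v m := Finset.sum_le_sum fun m _ => htb m
    _ ≤ (K * b * nr) * ‖ψ‖ := hps s

end
end

section
/- Let Φ(x) := e^x − (e^x − 1)/x for x > 0, Φ(0) := 0. Let (x_s)_{s≥1} be a sequence of nonnegative real numbers with x_1 < 1 and x_{s+1} ≤ Φ(x_s)·x_s for all s ≥ 1. Then: (1) x_{s+1} ≤ x_s² for all s; (2) x_s ≤ x_1^{2^{s−1}} for all s; and (3) Σ_{s=1}^∞ x_s ≤ x_1/(1 − x_1). -/
noncomputable section

/-- The function `Φ(x) = e^x - (e^x - 1)/x`, `Φ(0) = 0`. -/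
def Phi (x : ℝ) : ℝ := if x = 0 then 0 else Real.exp x - (Real.exp x - 1) / x

lemma Phi_le (x : ℝ) (hx : 0 ≤ x) (hx1 : x ≤ 1) : Phi x ≤ x := by
  rcases eq_or_lt_of_le hx with h | h
  · simp [Phi, ← h]
  · unfold Phi
    rw [if_neg (ne_of_gt h), sub_le_iff_le_add, ← sub_le_iff_le_add',
      le_div_iff₀ h]
    have hexp : 1 + x ≤ Real.exp x := by linarith [Real.add_one_le_exp x]
    nlinarith [mul_nonneg (sub_nonneg.2 hx1) (sub_nonneg.2 hexp)]

/-- the recursively bounded sequence from Subsection 5.3. -/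
theorem statement17 (x : ℕ+ → ℝ) (hx : ∀ s, 0 ≤ x s) (h1 : x 1 < 1)
    (hrec : ∀ s : ℕ+, x (s + 1) ≤ Phi (x s) * x s) :
    (∀ s : ℕ+, x (s + 1) ≤ x s ^ 2) ∧
    (∀ s : ℕ+, x s ≤ x 1 ^ 2 ^ ((s : ℕ) - 1)) ∧
    Summable x ∧ ∑' s : ℕ+, x s ≤ x 1 / (1 - x 1) := by
  have hlt : ∀ s : ℕ+, x s < 1 := by
    intro s
    induction s using PNat.recOn with
    | one => exact h1
    | succ s ih =>
      calc x (s + 1) ≤ Phi (x s) * x s := hrec s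
        _ ≤ x s * x s := mul_le_mul_of_nonneg_right (Phi_le _ (hx s) ih.le) (hx s)
        _ < 1 := by nlinarith [hx s]
  have hsq : ∀ s : ℕ+, x (s + 1) ≤ x s ^ 2 := by
    intro s
    calc x (s + 1) ≤ Phi (x s) * x s := hrec s
      _ ≤ x s * x s := mul_le_mul_of_nonneg_right (Phi_le _ (hx s) (hlt s).le) (hx s)
      _ = x s ^ 2 := (sq (x s)).symm
  have hpow : ∀ s : ℕ+, x s ≤ x 1 ^ 2 ^ ((s : ℕ) - 1) := by
    intro s
    induction s using PNat.recOn with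
    | one => simp
    | succ s ih =>
      have h2 : x (s + 1) ≤ (x 1 ^ 2 ^ ((s : ℕ) - 1)) ^ 2 := by
        calc x (s + 1) ≤ x s ^ 2 := hsq s
          _ ≤ (x 1 ^ 2 ^ ((s : ℕ) - 1)) ^ 2 := by
              exact pow_le_pow_left₀ (hx s) ih 2
      have hco : ((s + 1 : ℕ+) : ℕ) - 1 = (s : ℕ) := by
        simp [PNat.add_coe]
      rw [hco]
      have hs1 : (s : ℕ) - 1 + 1 = (s : ℕ) := Nat.succ_pred_eq_of_pos s.pos
      have : 2 ^ ((s : ℕ) - 1) * 2 = 2 ^ (s : ℕ) := by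
        rw [← pow_succ, hs1]
      rw [← this, pow_mul]
      exact h2
  have hgeom : ∀ s : ℕ+, x s ≤ x 1 ^ (s : ℕ) := by
    intro s
    refine (hpow s).trans (pow_le_pow_of_le_one (hx 1) h1.le ?_)
    have := Nat.lt_two_pow_self (n := (s : ℕ) - 1)
    omega
  have hxsum : Summable (fun s : ℕ+ => x 1 ^ (s : ℕ)) :=
    (summable_geometric_of_lt_one (hx 1) h1).comp_injective PNat.coe_injective
  have hsumm : Summable x := Summable.of_nonneg_of_le hx hgeom hxsum
  refine ⟨hsq, hpow, hsumm, ?_⟩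
  have hle : ∑' s : ℕ+, x s ≤ ∑' s : ℕ+, x 1 ^ (s : ℕ) :=
    Summable.tsum_le_tsum hgeom hsumm hxsum
  have heq : ∑' s : ℕ+, x 1 ^ (s : ℕ) = x 1 / (1 - x 1) := by
    rw [← Equiv.pnatEquivNat.symm.tsum_eq (fun s : ℕ+ => x 1 ^ (s : ℕ))]
    have : ∀ n : ℕ, x 1 ^ ((Equiv.pnatEquivNat.symm n : ℕ+) : ℕ) = x 1 * x 1 ^ n := by
      intro n
      simp [Equiv.pnatEquivNat, Nat.succPNat, pow_succ, mul_comm]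
    rw [tsum_congr this, tsum_mul_left, tsum_geometric_of_lt_one (hx 1) h1,
      div_eq_mul_inv]
  linarith [hle, heq.le]

end
end
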